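/- Let W ⊆ V be a subspace with inclusion ι : W ↪ V, and for a subspace L ⊆ V ⊕ V* define its pullback ι*L := {(X, ξ∘ι) ∈ W ⊕ W* : (X, ξ) ∈ L and X ∈ W}. If L is Lagrangian in V ⊕ V* (L = L^⊥ for the canonical pairing), then ι*L is Lagrangian in W ⊕ W* with respect to the canonical pairing ⟨(X,α),(Y,β)⟩ = ½(α(Y) + β(X)) on W ⊕ W*. -/

import Mathlib

/-- The canonical symmetric pairing on `V ⊕ V*`:
`⟨(X,ξ),(Y,η)⟩ = ½ (ξ(Y) + η(X))`. -/
noncomputable def pairVD (V : Type*) [AddCommGroup V] [Module ℝ V] :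
    (V × Module.Dual ℝ V) →ₗ[ℝ] (V × Module.Dual ℝ V) →ₗ[ℝ] ℝ :=
  LinearMap.mk₂ ℝ (fun p q => (p.2 q.1 + q.2 p.1) / 2)
    (by intro m m' n; simp; ring)
    (by intro c m n; simp; ring)
    (by intro m n n'; simp; ring)
    (by intro c m n; simp; ring)

/-- The orthogonal of a subspace of `V ⊕ V*` with respect to the canonical pairing. -/
noncomputable def perpVD {V : Type*} [AddCommGroup V] [Module ℝ V]
    (A : Submodule ℝ (V × Module.Dual ℝ V)) : Submodule ℝ (V × Module.Dual ℝ V) where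
  carrier := {e | ∀ a ∈ A, pairVD V e a = 0}
  add_mem' := by
    intro x y hx hy a ha
    simp only [Set.mem_setOf_eq] at *
    rw [map_add, LinearMap.add_apply, hx a ha, hy a ha, add_zero]
  zero_mem' := by
    intro a ha
    simp
  smul_mem' := by
    intro c x hx a ha
    simp only [Set.mem_setOf_eq] at *
    rw [map_smul, LinearMap.smul_apply, hx a ha, smul_zero]

section aux
variable {V : Type*} [AddCommGroup V] [Module ℝ V]

lemma pairVD_apply (a b : V × Module.Dual ℝ V) : pairVD V a b = (a.2 b.1 + b.2 a.1) / 2 := rfl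

lemma pairVD_symm (a b : V × Module.Dual ℝ V) : pairVD V a b = pairVD V b a := by
  simp only [pairVD_apply]; ring

lemma pairVD_isRefl : LinearMap.BilinForm.IsRefl (pairVD V) := fun a b h => by rw [pairVD_symm]; exact h

lemma mem_perpVD {A : Submodule ℝ (V × Module.Dual ℝ V)} {e : V × Module.Dual ℝ V} :
    e ∈ perpVD A ↔ ∀ a ∈ A, pairVD V e a = 0 := Iff.rfl

lemma perpVD_eq_orthogonal (A : Submodule ℝ (V × Module.Dual ℝ V)) :
    perpVD A = LinearMap.BilinForm.orthogonal (pairVD V) A := by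
  ext e
  simp only [mem_perpVD, LinearMap.BilinForm.mem_orthogonal_iff, LinearMap.BilinForm.IsOrtho]
  exact forall₂_congr fun a _ => by rw [pairVD_symm]

lemma pairVD_nondeg [FiniteDimensional ℝ V] : LinearMap.BilinForm.Nondegenerate (pairVD V) := by
  refine (LinearMap.IsRefl.nondegenerate_iff_separatingLeft (B := pairVD V) pairVD_isRefl).mpr ?_
  intro e he
  have h1 : e.2 = 0 := by
    ext y
    have := he (y, 0)
    simp only [pairVD_apply, LinearMap.zero_apply, add_zero] at this
    simpa using this
  have h2 : e.1 = 0 := by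
    rw [← Module.forall_dual_apply_eq_zero_iff ℝ]
    intro η
    have := he (0, η)
    simp only [pairVD_apply, h1, LinearMap.zero_apply, zero_add] at this
    simpa using this
  exact Prod.ext h2 h1

lemma perpVD_perpVD [FiniteDimensional ℝ V] (A : Submodule ℝ (V × Module.Dual ℝ V)) :
    perpVD (perpVD A) = A := by
  rw [perpVD_eq_orthogonal, perpVD_eq_orthogonal]
  exact LinearMap.BilinForm.orthogonal_orthogonal pairVD_nondeg pairVD_isRefl A

lemma perpVD_sup (M N : Submodule ℝ (V × Module.Dual ℝ V)) :
    perpVD (M ⊔ N) = perpVD M ⊓ perpVD N := by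
  ext e
  simp only [mem_perpVD, Submodule.mem_inf]
  constructor
  · intro h
    exact ⟨fun a ha => h a (Submodule.mem_sup_left ha),
           fun a ha => h a (Submodule.mem_sup_right ha)⟩
  · rintro ⟨h1, h2⟩ a ha
    rcases Submodule.mem_sup.mp ha with ⟨m, hm, n, hn, rfl⟩
    rw [map_add, h1 m hm, h2 n hn, add_zero]

end aux

/-- The pullback of a subspace `L ⊆ V ⊕ V*` to a subspace `W ⊆ V`:
`ι*L := {(X, ξ∘ι) ∈ W ⊕ W* : (X, ξ) ∈ L, X ∈ W}` where `ι : W ↪ V` is the inclusion. -/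
def pullbackVD {V : Type*} [AddCommGroup V] [Module ℝ V]
    (W : Submodule ℝ V) (L : Submodule ℝ (V × Module.Dual ℝ V)) :
    Set (W × Module.Dual ℝ W) :=
  {p | ∃ ξ : Module.Dual ℝ V, ((p.1 : V), ξ) ∈ L ∧ p.2 = ξ.comp W.subtype}

/-- If `L` is Lagrangian in `V ⊕ V*`, then its pullback `ι*L` to a
subspace `W ⊆ V` equals its own orthogonal with respect to the canonical pairing
`⟨(X,α),(Y,β)⟩ = ½(α(Y) + β(X))` on `W ⊕ W*`, i.e. `ι*L` is Lagrangian in `W ⊕ W*`. -/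
theorem pullback_of_lagrangian_is_lagrangian
    {V : Type*} [AddCommGroup V] [Module ℝ V] [FiniteDimensional ℝ V]
    (W : Submodule ℝ V) (L : Submodule ℝ (V × Module.Dual ℝ V))
    (hL : perpVD L = L) :
    pullbackVD W L =
      {q : W × Module.Dual ℝ W | ∀ p ∈ pullbackVD W L, pairVD W q p = 0} := by
  ext q
  constructor
  · -- isotropic direction
    rintro ⟨ξ, hξL, hξ⟩ p ⟨η, hηL, hη⟩
    have h0 : pairVD V ((q.1 : V), ξ) ((p.1 : V), η) = 0 := by
      rw [← hL] at hξL
      exact hξL _ hηL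
    simp only [pairVD_apply, hξ, hη] at *
    simpa using h0
  · intro hq
    -- coisotropic C and its perp
    set C : Submodule ℝ (V × Module.Dual ℝ V) := W.prod ⊤ with hC
    -- extend q.2 to a functional on V
    obtain ⟨η, hη⟩ := Subspace.dualRestrict_surjective (W := W) q.2
    set e : V × Module.Dual ℝ V := ((q.1 : V), η) with he
    -- e is orthogonal to L ⊓ C
    have heperp : e ∈ perpVD (L ⊓ C) := by
      intro a ha
      rcases Submodule.mem_inf.mp ha with ⟨haL, haC⟩
      rcases Submodule.mem_prod.mp haC with ⟨ha1, -⟩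
      have hp : ((⟨a.1, ha1⟩, a.2.comp W.subtype) : W × Module.Dual ℝ W) ∈ pullbackVD W L :=
        ⟨a.2, haL, rfl⟩
      have := hq _ hp
      simp only [pairVD_apply, LinearMap.comp_apply, Submodule.subtype_apply] at this ⊢
      have hηa : q.2 ⟨a.1, ha1⟩ = η a.1 := by
        rw [← hη, Submodule.dualRestrict_apply]
      rw [hηa] at this
      exact this
    -- perpVD (L ⊓ C) = L ⊔ perpVD C
    have key : perpVD (L ⊓ C) = L ⊔ perpVD C := by
      have : L ⊓ C = perpVD (L ⊔ perpVD C) := by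
        rw [perpVD_sup, hL, perpVD_perpVD]
      rw [this, perpVD_perpVD]
    rw [key] at heperp
    rcases Submodule.mem_sup.mp heperp with ⟨l, hl, c, hc, hec⟩
    -- characterize c ∈ perpVD C
    have hc1 : c.1 = 0 := by
      rw [← Module.forall_dual_apply_eq_zero_iff ℝ]
      intro φ
      have := hc ((0 : V), φ) (Submodule.mem_prod.mpr ⟨W.zero_mem, trivial⟩)
      simp only [pairVD_apply] at this
      have : c.2 0 + φ c.1 = 0 := by linarith
      simpa using this
    have hc2 : ∀ w ∈ W, c.2 w = 0 := by
      intro w hw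
      have := hc (w, (0 : Module.Dual ℝ V)) (Submodule.mem_prod.mpr ⟨hw, trivial⟩)
      simp only [pairVD_apply] at this
      have : c.2 w + (0 : Module.Dual ℝ V) c.1 = 0 := by linarith
      simpa using this
    -- extract the witness
    have hl1 : l.1 = (q.1 : V) := by
      have := congrArg Prod.fst hec
      simp [he, hc1] at this
      exact this
    refine ⟨l.2, ?_, ?_⟩
    · rw [← hl1]; exact hl
    · ext w
      have h2 : η = l.2 + c.2 := by
        have := congrArg Prod.snd hec
        simpa [he] using this.symm
      have hηw : q.2 w = η w := by rw [← hη, Submodule.dualRestrict_apply]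
      simp only [LinearMap.comp_apply, Submodule.subtype_apply, hηw, h2,
        LinearMap.add_apply, hc2 w w.2, add_zero]
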